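/- If (Kₙ)ₙ∈ℕ is a sequence of mutually disjoint nonempty compact intervals in ℝ (possibly singletons), then ℝ \ ⋃ₙ Kₙ is nonempty and cannot be written as a union of finitely many intervals. -/

import Mathlib

open Set

structure GoodInt (K : ℕ → Set ℝ) (c₀ d₀ : ℝ) (j : ℕ) where
  c : ℝ
  d : ℝ
  p : ℕ
  q : ℕ
  hc : c ∈ K p
  hd : d ∈ K q
  hpq : p ≠ q
  hcd : c < d
  hsub : Set.Icc c d ⊆ Set.Icc c₀ d₀
  havoid : ∀ i, i < j → ∀ x ∈ Set.Icc c d, x ∉ K i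

section Aux

variable (K : ℕ → Set ℝ)
    (hK : ∀ n, ∃ a b : ℝ, a ≤ b ∧ K n = Set.Icc a b)
    (hdisj : ∀ m n : ℕ, m ≠ n → Disjoint (K m) (K n))

omit hK in include hdisj in
lemma K_mem_unique {m n : ℕ} {x : ℝ} (hm : x ∈ K m) (hn : x ∈ K n) : m = n := by
  by_contra h
  exact Set.disjoint_left.mp (hdisj m n h) hm hn

include hK hdisj in
lemma step_ex {c₀ d₀ : ℝ} (hcov : ∀ x ∈ Set.Icc c₀ d₀, ∃ n, x ∈ K n)
    (j : ℕ) (s : GoodInt K c₀ d₀ j) :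
    ∃ t : GoodInt K c₀ d₀ (j+1), Set.Icc t.c t.d ⊆ Set.Icc s.c s.d := by
  obtain ⟨α, β, hαβ, hKj⟩ := hK j
  by_cases hdis : s.d < α ∨ β < s.c
  · refine ⟨⟨s.c, s.d, s.p, s.q, s.hc, s.hd, s.hpq, s.hcd, s.hsub, ?_⟩, subset_rfl⟩
    intro i hi x hx hxK
    rcases Nat.lt_or_ge i j with hij | hij
    · exact s.havoid i hij x hx hxK
    · have hieq : i = j := by omega
      subst hieq
      rw [hKj] at hxK
      rcases hdis with h | h
      · linarith [hxK.1, hx.2]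
      · linarith [hxK.2, hx.1]
  · push_neg at hdis
    obtain ⟨hαd, hcβ⟩ := hdis
    by_cases hcK : s.c ∈ K j
    · -- s.c ∈ K j, so s.p = j and s.d ∉ K j
      have hpj : s.p = j := K_mem_unique K hdisj s.hc hcK
      obtain ⟨γ, δ', hγδ, hKq⟩ := hK s.q
      have hdq : s.d ∈ Set.Icc γ δ' := by rw [← hKq]; exact s.hd
      have hqj : s.q ≠ j := fun h => s.hpq (hpj.trans h.symm)
      have hcj : s.c ∈ Set.Icc α β := by rw [← hKj]; exact hcK
      have hβγ : β < γ := by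
        by_contra hle
        push_neg at hle
        have h1 : max α γ ∈ K j := by
          rw [hKj]; exact ⟨le_max_left _ _, max_le hαβ hle⟩
        have h2 : max α γ ∈ K s.q := by
          rw [hKq]
          exact ⟨le_max_right _ _, max_le (by linarith [hcj.1, s.hcd, hdq.2]) hγδ⟩
        exact Set.disjoint_left.mp (hdisj j s.q hqj.symm) h1 h2
      set z := (β + γ) / 2 with hz
      have hz1 : β < z := by rw [hz]; linarith
      have hz2 : z < γ := by rw [hz]; linarith
      have hzin : z ∈ Set.Icc s.c s.d := ⟨by linarith [hcj.2], by linarith [hdq.1]⟩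
      obtain ⟨r, hr⟩ := hcov z (s.hsub hzin)
      have hγq : γ ∈ K s.q := by rw [hKq]; exact ⟨le_refl _, hγδ⟩
      have hrq : r ≠ s.q := by
        intro h
        rw [h, hKq] at hr
        linarith [hr.1]
      refine ⟨⟨z, γ, r, s.q, hr, hγq, hrq, hz2, ?_, ?_⟩, ?_⟩
      · exact fun y hy => s.hsub ⟨le_trans hzin.1 hy.1, le_trans hy.2 (by linarith [hdq.1])⟩
      · intro i hi y hy hyK
        rcases Nat.lt_or_ge i j with hij | hij
        · exact s.havoid i hij y ⟨le_trans hzin.1 hy.1, le_trans hy.2 (by linarith [hdq.1])⟩ hyK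
        · have : i = j := by omega
          subst this
          rw [hKj] at hyK
          linarith [hyK.2, hy.1]
      · exact fun y hy => ⟨le_trans hzin.1 hy.1, le_trans hy.2 (by linarith [hdq.1])⟩
    · -- s.c ∉ K j, so s.c < α
      have hcα : s.c < α := by
        by_contra hle
        push_neg at hle
        exact hcK (by rw [hKj]; exact ⟨hle, hcβ⟩)
      have hpj : s.p ≠ j := fun h => hcK (by have hh := s.hc; rwa [h] at hh)
      obtain ⟨γ, δ, hγδ, hKp⟩ := hK s.p
      have hcp : s.c ∈ Set.Icc γ δ := by rw [← hKp]; exact s.hc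
      have hδα : δ < α := by
        by_contra hle
        push_neg at hle
        have h1 : α ∈ K s.p := by rw [hKp]; exact ⟨by linarith [hcp.1], hle⟩
        have h2 : α ∈ K j := by rw [hKj]; exact ⟨le_refl _, hαβ⟩
        exact Set.disjoint_left.mp (hdisj s.p j hpj) h1 h2
      set z := (δ + α) / 2 with hz
      have hz1 : δ < z := by rw [hz]; linarith
      have hz2 : z < α := by rw [hz]; linarith
      have hzin : z ∈ Set.Icc s.c s.d := ⟨by linarith [hcp.2], by linarith⟩
      obtain ⟨r, hr⟩ := hcov z (s.hsub hzin)
      have hδp : δ ∈ K s.p := by rw [hKp]; exact ⟨hγδ, le_refl _⟩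
      have hpr : s.p ≠ r := by
        intro h
        rw [← h, hKp] at hr
        linarith [hr.2]
      refine ⟨⟨δ, z, s.p, r, hδp, hr, hpr, hz1, ?_, ?_⟩, ?_⟩
      · exact fun y hy => s.hsub ⟨le_trans hcp.2 hy.1, le_trans hy.2 hzin.2⟩
      · intro i hi y hy hyK
        rcases Nat.lt_or_ge i j with hij | hij
        · exact s.havoid i hij y ⟨le_trans hcp.2 hy.1, le_trans hy.2 hzin.2⟩ hyK
        · have : i = j := by omega
          subst this
          rw [hKj] at hyK
          linarith [hyK.1, hy.2]
      · exact fun y hy => ⟨le_trans hcp.2 hy.1, le_trans hy.2 hzin.2⟩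

noncomputable def chain {c₀ d₀ : ℝ} (hcov : ∀ x ∈ Set.Icc c₀ d₀, ∃ n, x ∈ K n)
    (base : GoodInt K c₀ d₀ 0) : ∀ j, GoodInt K c₀ d₀ j
  | 0 => base
  | (j+1) => (step_ex K hK hdisj hcov j (chain hcov base j)).choose

include hK hdisj in
lemma chain_sub {c₀ d₀ : ℝ} (hcov : ∀ x ∈ Set.Icc c₀ d₀, ∃ n, x ∈ K n)
    (base : GoodInt K c₀ d₀ 0) (j : ℕ) :
    Set.Icc (chain K hK hdisj hcov base (j+1)).c (chain K hK hdisj hcov base (j+1)).d ⊆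
      Set.Icc (chain K hK hdisj hcov base j).c (chain K hK hdisj hcov base j).d := by
  exact (step_ex K hK hdisj hcov j (chain K hK hdisj hcov base j)).choose_spec

include hK hdisj in
lemma gap {p q : ℕ} {c d : ℝ} (hc : c ∈ K p) (hd : d ∈ K q) (hpq : p ≠ q) (hcd : c < d) :
    ∃ x ∈ Set.Icc c d, x ∉ ⋃ n, K n := by
  by_contra h
  push_neg at h
  have hcov : ∀ x ∈ Set.Icc c d, ∃ n, x ∈ K n := by
    intro x hx
    have := h x hx
    simpa [Set.mem_iUnion] using this
  have base : GoodInt K c d 0 :=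
    ⟨c, d, p, q, hc, hd, hpq, hcd, subset_rfl, fun i hi => (Nat.not_lt_zero i hi).elim⟩
  set S := chain K hK hdisj hcov base with hS
  have hmemsucc : ∀ j, (S (j+1)).c ∈ Set.Icc (S j).c (S j).d ∧
      (S (j+1)).d ∈ Set.Icc (S j).c (S j).d := by
    intro j
    constructor
    · exact chain_sub K hK hdisj hcov base j ⟨le_refl _, (S (j+1)).hcd.le⟩
    · exact chain_sub K hK hdisj hcov base j ⟨(S (j+1)).hcd.le, le_refl _⟩
  have cmono : Monotone (fun j => (S j).c) :=
    monotone_nat_of_le_succ (fun j => (hmemsucc j).1.1)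
  have danti : Antitone (fun j => (S j).d) :=
    antitone_nat_of_succ_le (fun j => (hmemsucc j).2.2)
  have cross : ∀ i j, (S i).c ≤ (S j).d := by
    intro i j
    rcases le_total i j with hij | hij
    · exact le_trans (cmono hij) (S j).hcd.le
    · exact le_trans (S i).hcd.le (danti hij)
  have hbdd : BddAbove (Set.range fun j => (S j).c) :=
    ⟨(S 0).d, by rintro y ⟨j, rfl⟩; exact cross j 0⟩
  set x := ⨆ j, (S j).c with hx
  have hxl : ∀ j, (S j).c ≤ x := fun j => le_ciSup hbdd j
  have hxu : ∀ j, x ≤ (S j).d := fun j => ciSup_le (fun i => cross i j)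
  have hxin : x ∈ Set.Icc c d := (S 0).hsub ⟨hxl 0, hxu 0⟩
  obtain ⟨n, hn⟩ := hcov x hxin
  exact (S (n+1)).havoid n (Nat.lt_succ_self n) x ⟨hxl (n+1), hxu (n+1)⟩ hn

end Aux

theorem stmt_15 (K : ℕ → Set ℝ)
    (hK : ∀ n, ∃ a b : ℝ, a ≤ b ∧ K n = Set.Icc a b)
    (hdisj : ∀ m n : ℕ, m ≠ n → Disjoint (K m) (K n)) :
    ((⋃ n, K n)ᶜ).Nonempty ∧
      ¬ ∃ (k : ℕ) (I : Fin k → Set ℝ), (∀ i, Convex ℝ (I i)) ∧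
        (⋃ i, I i) = (⋃ n, K n)ᶜ := by
  classical
  have hne : ∀ n, (K n).Nonempty := by
    intro n
    obtain ⟨a, b, hab, h⟩ := hK n
    rw [h]
    exact Set.nonempty_Icc.mpr hab
  choose x hx using hne
  have hxinj : Function.Injective x := by
    intro m n h
    by_contra hmn
    exact Set.disjoint_left.mp (hdisj m n hmn) (hx m) (h ▸ hx n)
  have gap2 : ∀ m n : ℕ, m ≠ n → x m < x n →
      ∃ z ∈ Set.Icc (x m) (x n), z ∉ ⋃ i, K i :=
    fun m n hmn hlt => gap K hK hdisj (hx m) (hx n) hmn hlt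
  constructor
  · rcases lt_trichotomy (x 0) (x 1) with h | h | h
    · obtain ⟨z, _, hz⟩ := gap2 0 1 (by omega) h
      exact ⟨z, hz⟩
    · exact absurd (hxinj h) (by omega)
    · obtain ⟨z, _, hz⟩ := gap2 1 0 (by omega) h
      exact ⟨z, hz⟩
  · rintro ⟨k, I, hconv, hI⟩
    set s : Finset ℝ := Finset.image (fun i : Fin (k+2) => x i) Finset.univ with hs
    have hinj2 : Function.Injective (fun i : Fin (k+2) => x (i : ℕ)) :=
      fun a b hab => Fin.val_injective (hxinj hab)
    have hcard : s.card = k + 2 := by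
      rw [hs, Finset.card_image_of_injective _ hinj2, Finset.card_univ, Fintype.card_fin]
    set e := s.orderIsoOfFin hcard with he
    set t : Fin (k+2) → ℝ := fun i => (e i : ℝ) with htdef
    have ht : StrictMono t := fun i j h => Subtype.coe_lt_coe.mpr (e.strictMono h)
    have htmem : ∀ i, ∃ m : ℕ, t i = x m := by
      intro i
      have h2 : (t i) ∈ s := (e i).2
      rw [hs, Finset.mem_image] at h2
      obtain ⟨m, _, hm⟩ := h2
      exact ⟨m, hm.symm⟩
    choose nn hnn using htmem
    have hu : ∀ i : Fin (k+1), ∃ z ∈ Set.Icc (t i.castSucc) (t i.succ), z ∉ ⋃ n, K n := by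
      intro i
      refine gap K hK hdisj (p := nn i.castSucc) (q := nn i.succ) ?_ ?_ ?_
        (ht (Fin.castSucc_lt_succ : i.castSucc < i.succ))
      · rw [hnn]; exact hx _
      · rw [hnn]; exact hx _
      · intro h
        apply (ht (Fin.castSucc_lt_succ : i.castSucc < i.succ)).ne
        rw [hnn, hnn, h]
    choose u hu1 hu2 using hu
    have huI : ∀ i : Fin (k+1), ∃ fi : Fin k, u i ∈ I fi := by
      intro i
      have h1 : u i ∈ (⋃ n, K n)ᶜ := hu2 i
      rw [← hI] at h1
      exact Set.mem_iUnion.mp h1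
    choose f hf using huI
    have main : ∀ i j : Fin (k+1), i < j → f i = f j → False := by
      intro i j hij hfij
      have h1 : u i ≤ t i.succ := (hu1 i).2
      have hle : i.succ ≤ j.castSucc := by
        rw [Fin.le_def]
        simp only [Fin.val_succ, Fin.coe_castSucc]
        exact Fin.lt_def.mp hij
      have h2 : t i.succ ≤ u j := le_trans (ht.monotone hle) (hu1 j).1
      have h3 : t i.succ ∈ I (f i) :=
        (hconv (f i)).ordConnected.out (hf i) (by rw [hfij]; exact hf j) ⟨h1, h2⟩
      have h4 : t i.succ ∈ (⋃ n, K n)ᶜ := by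
        rw [← hI]
        exact Set.mem_iUnion.mpr ⟨f i, h3⟩
      exact h4 (Set.mem_iUnion.mpr ⟨nn i.succ, (hnn i.succ) ▸ hx (nn i.succ)⟩)
    obtain ⟨i, j, hij, hfij⟩ := Fintype.exists_ne_map_eq_of_card_lt f (by simp)
    rcases hij.lt_or_gt with h | h
    · exact main i j h hfij
    · exact main j i h hfij.symm
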